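/- Similarly, under the same hypotheses, (\{f_n ∘ S_{f,ω}^{-1}\}, \{S_{g,τ}^{-1} τ_n\}) is a dual p-ABS for (\{g_n\},\{ω_n\}): x = Σ_n (f_n S_{f,ω}^{-1})(x) ω_n = Σ_n g_n(x) S_{g,τ}^{-1} τ_n for all x ∈ X. -/
import Mathlib


open scoped ENNReal
open Filter Topology

noncomputable section

/-- The sequence space `ℓ^p(ℕ)` over `ℝ`. -/
abbrev lpN (p : ℝ≥0∞) := lp (fun _ : ℕ => ℝ) p

/-- A pair `({f_n}, {τ_n})` is a p-approximate Bessel sequence (p-ABS) for `X`: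
the analysis map `x ↦ (f_n x)_n` is a well-defined bounded linear operator into `ℓ^p`,
and the synthesis map `(a_n) ↦ Σ a_n τ_n` is a well-defined bounded linear operator. -/
def IsPABS (p : ℝ≥0∞) [Fact (1 ≤ p)] {X : Type*} [NormedAddCommGroup X] [NormedSpace ℝ X]
    (f : ℕ → X →L[ℝ] ℝ) (τ : ℕ → X) : Prop :=
  (∃ θf : X →L[ℝ] lpN p, ∀ (x : X) (n : ℕ), (θf x) n = f n x) ∧
  (∃ θτ : lpN p →L[ℝ] X, ∀ a : lpN p, HasSum (fun n => (a n) • τ n) (θτ a))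

/-- A pair `({f_n}, {τ_n})` is a p-approximate Schauder frame (p-ASF) for `X`:
it is a p-ABS whose frame operator `S_{f,τ} = θ_τ ∘ θ_f` is bounded invertible. -/
def IsPASF (p : ℝ≥0∞) [Fact (1 ≤ p)] {X : Type*} [NormedAddCommGroup X] [NormedSpace ℝ X]
    (f : ℕ → X →L[ℝ] ℝ) (τ : ℕ → X) : Prop :=
  ∃ (θf : X →L[ℝ] lpN p) (θτ : lpN p →L[ℝ] X) (S : X ≃L[ℝ] X),
    (∀ (x : X) (n : ℕ), (θf x) n = f n x) ∧
    (∀ a : lpN p, HasSum (fun n => (a n) • τ n) (θτ a)) ∧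
    (S : X →L[ℝ] X) = θτ.comp θf
/-- approximately dual p-ABSs generate a dual:
`({f_n ∘ S_{f,ω}⁻¹}, {S_{g,τ}⁻¹ τ_n})` is a dual p-ABS for `({g_n},{ω_n})`. -/
theorem approx_dual_generates_dual_right
    {X : Type*} [NormedAddCommGroup X] [NormedSpace ℝ X] [CompleteSpace X]
    (p : ℝ≥0∞) [Fact (1 ≤ p)] (hp : p ≠ ∞)
    (f g : ℕ → X →L[ℝ] ℝ) (τ ω : ℕ → X)
    (θf θg : X →L[ℝ] lpN p) (θτ θω : lpN p →L[ℝ] X)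
    (hθf : ∀ (x : X) (n : ℕ), (θf x) n = f n x)
    (hθg : ∀ (x : X) (n : ℕ), (θg x) n = g n x)
    (hθτ : ∀ a : lpN p, HasSum (fun n => (a n) • τ n) (θτ a))
    (hθω : ∀ a : lpN p, HasSum (fun n => (a n) • ω n) (θω a))
    (h1 : ‖ContinuousLinearMap.id ℝ X - θω.comp θf‖ < 1)
    (h2 : ‖ContinuousLinearMap.id ℝ X - θτ.comp θg‖ < 1)
    (Sfω Sgτ : X ≃L[ℝ] X)
    (hSfω : (Sfω : X →L[ℝ] X) = θω.comp θf)
    (hSgτ : (Sgτ : X →L[ℝ] X) = θτ.comp θg) :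
    IsPABS p (fun n => (f n).comp (Sfω.symm : X →L[ℝ] X)) (fun n => Sgτ.symm (τ n)) ∧
    (∀ x : X,
      HasSum (fun n => f n (Sfω.symm x) • ω n) x ∧
      HasSum (fun n => g n x • Sgτ.symm (τ n)) x) := by
  refine ⟨⟨⟨θf.comp (Sfω.symm : X →L[ℝ] X), fun x n => hθf _ n⟩,
    ⟨((Sgτ.symm : X →L[ℝ] X)).comp θτ, fun a => ?_⟩⟩, fun x => ⟨?_, ?_⟩⟩
  · have := (hθτ a).mapL (Sgτ.symm : X →L[ℝ] X)
    simpa using this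
  · have h := hθω (θf (Sfω.symm x))
    have hx : θω (θf (Sfω.symm x)) = x := by
      have h' : (θω.comp θf) (Sfω.symm x) = x := by
        rw [← hSfω]; exact Sfω.apply_symm_apply x
      simpa using h'
    rw [hx] at h
    simpa [hθf] using h
  · have h := (hθτ (θg x)).mapL (Sgτ.symm : X →L[ℝ] X)
    have hx : θτ (θg x) = Sgτ x := by
      have h' : (θτ.comp θg) x = Sgτ x := by rw [← hSgτ]; rfl
      simpa using h'
    rw [hx] at h
    simpa [hθg] using h
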